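/- Let γ ≥ 2, 1 < p < 2 and a, b, c, d ∈ ℝ with (a-c, b-d) ≠ (0,0). Then (J_γ(a-b) - J_γ(c-d))·(J_p(a-c) - J_p(b-d)) ≥ (4(γ-1)(p-1)/γ²)·| |a-b|^((γ-2)/2)·(a-b) - |c-d|^((γ-2)/2)·(c-d) |²·(|a-c| + |b-d|)^(p-2). -/

import Mathlib

open Real

/-- `J r t = |t|^(r-2) · t`. -/
noncomputable def J (r t : ℝ) : ℝ := |t| ^ (r - 2) * t

open Set

lemma Jpos' {r u : ℝ} (hr : 1 < r) (hu : 0 ≤ u) : J r u = u ^ (r - 1) := by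
  rcases hu.eq_or_lt with h | h
  · simp [J, ← h, Real.zero_rpow (show r - 1 ≠ 0 by intro h'; nlinarith)]
  · rw [J, abs_of_pos h, show r - 1 = (r - 2) + 1 by ring, Real.rpow_add_one h.ne']

lemma Jodd' (r u : ℝ) : J r (-u) = -(J r u) := by
  simp [J, abs_neg]

lemma Vpos' {γ u : ℝ} (hγ : 2 ≤ γ) (hu : 0 ≤ u) : |u| ^ ((γ - 2) / 2) * u = u ^ (γ / 2) := by
  rcases hu.eq_or_lt with h | h
  · simp [← h, Real.zero_rpow (show γ / 2 ≠ 0 from ne_of_gt (by linarith))]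
  · rw [abs_of_pos h, show γ / 2 = (γ - 2) / 2 + 1 by ring, Real.rpow_add_one h.ne']

/-- Bernoulli-derived key inequality for the second derivative. -/
lemma bern_key {γ x y : ℝ} (hγ : 2 ≤ γ) (hx : 0 < x) (hy : 0 ≤ y) :
    γ * (y * x ^ (γ - 3)) + 2 * x ^ (γ - 2) ≤ γ * x ^ (γ - 2) + 2 * (y ^ (γ / 2) * x ^ (γ / 2 - 2)) := by
  have h1 : 1 + (γ / 2) * (y / x - 1) ≤ (1 + (y / x - 1)) ^ (γ / 2) :=
    one_add_mul_self_le_rpow_one_add (by have := div_nonneg hy hx.le; linarith) (by linarith)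
  rw [show (1 : ℝ) + (y / x - 1) = y / x by ring, Real.div_rpow hy hx.le] at h1
  have h3 : (1 + γ / 2 * (y / x - 1)) * x ^ (γ / 2) ≤ y ^ (γ / 2) :=
    (le_div_iff₀ (Real.rpow_pos_of_pos hx _)).mp h1
  have h4 : x ^ (γ / 2) + γ / 2 * (y * x ^ (γ / 2 - 1)) - γ / 2 * x ^ (γ / 2) ≤ y ^ (γ / 2) := by
    have e3 : y * x ^ (γ / 2 - 1) = y / x * x ^ (γ / 2) := by
      rw [Real.rpow_sub_one hx.ne']; field_simp
    rw [e3]; calc x ^ (γ / 2) + γ / 2 * (y / x * x ^ (γ / 2)) - γ / 2 * x ^ (γ / 2)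
        = (1 + γ / 2 * (y / x - 1)) * x ^ (γ / 2) := by ring
      _ ≤ y ^ (γ / 2) := h3
  have h5 := mul_le_mul_of_nonneg_right h4
    (le_of_lt (Real.rpow_pos_of_pos hx (γ / 2 - 2)))
  have e2 : x ^ (γ / 2) * x ^ (γ / 2 - 2) = x ^ (γ - 2) := by
    rw [← Real.rpow_add hx]; congr 1; ring
  have e4 : x ^ (γ / 2 - 1) * x ^ (γ / 2 - 2) = x ^ (γ - 3) := by
    rw [← Real.rpow_add hx]; congr 1; ring
  have h6 : x ^ (γ - 2) + γ / 2 * (y * x ^ (γ - 3)) - γ / 2 * x ^ (γ - 2)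
      ≤ y ^ (γ / 2) * x ^ (γ / 2 - 2) := by
    calc x ^ (γ - 2) + γ / 2 * (y * x ^ (γ - 3)) - γ / 2 * x ^ (γ - 2)
        = (x ^ (γ / 2) + γ / 2 * (y * x ^ (γ / 2 - 1)) - γ / 2 * x ^ (γ / 2)) * x ^ (γ / 2 - 2) := by
          rw [← e2, ← e4]; ring
      _ ≤ y ^ (γ / 2) * x ^ (γ / 2 - 2) := h5
  linarith


variable {γ x y : ℝ}


lemma hd_rpow {e x : ℝ} (hx : 0 < x) :
    HasDerivAt (fun u : ℝ => u ^ e) (e * x ^ (e - 1)) x :=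
  Real.hasDerivAt_rpow_const (Or.inl hx.ne')

lemma hd1 (γ : ℝ) (hx : 0 < x) : HasDerivAt (fun u : ℝ => u ^ (γ - 1)) ((γ - 1) * x ^ (γ - 2)) x := by
  simpa [show γ - 1 - 1 = γ - 2 by ring] using hd_rpow (e := γ - 1) hx

lemma hd2 (γ : ℝ) (hx : 0 < x) : HasDerivAt (fun u : ℝ => u ^ (γ / 2)) ((γ / 2) * x ^ (γ / 2 - 1)) x :=
  hd_rpow hx

lemma hd3 (γ : ℝ) (hx : 0 < x) : HasDerivAt (fun u : ℝ => u ^ (γ - 2)) ((γ - 2) * x ^ (γ - 3)) x := by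
  simpa [show γ - 2 - 1 = γ - 3 by ring] using hd_rpow (e := γ - 2) hx

lemma hd4 (γ : ℝ) (hx : 0 < x) :
    HasDerivAt (fun u : ℝ => u ^ (γ / 2 - 1)) ((γ / 2 - 1) * x ^ (γ / 2 - 2)) x := by
  simpa [show γ / 2 - 1 - 1 = γ / 2 - 2 by ring] using hd_rpow (e := γ / 2 - 1) hx

lemma coreA_g1 (hγ : 2 ≤ γ) (hy : 0 < y) :
    ∀ x, y ≤ x →
      0 ≤ γ ^ 2 * ((γ - 1) * x ^ (γ - 2) * (x - y) + (x ^ (γ - 1) - y ^ (γ - 1)))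
        - 4 * (γ - 1) * γ * ((x ^ (γ / 2) - y ^ (γ / 2)) * x ^ (γ / 2 - 1)) := by
  have hder : ∀ {x : ℝ}, 0 < x → HasDerivAt (fun x : ℝ =>
      γ ^ 2 * ((γ - 1) * x ^ (γ - 2) * (x - y) + (x ^ (γ - 1) - y ^ (γ - 1)))
        - 4 * (γ - 1) * γ * ((x ^ (γ / 2) - y ^ (γ / 2)) * x ^ (γ / 2 - 1)))
      (γ ^ 2 * ((γ - 1) * ((γ - 2) * x ^ (γ - 3)) * (x - y) + 2 * ((γ - 1) * x ^ (γ - 2)))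
        - 4 * (γ - 1) * γ * ((γ / 2) * (x ^ (γ / 2 - 1) * x ^ (γ / 2 - 1))
            + (x ^ (γ / 2) - y ^ (γ / 2)) * ((γ / 2 - 1) * x ^ (γ / 2 - 2)))) x := by
    intro x hx
    have h_a := ((((hd3 γ hx).const_mul (γ - 1)).mul ((hasDerivAt_id x).sub_const y)).add
      ((hd1 γ hx).sub_const (y ^ (γ - 1)))).const_mul (γ ^ 2)
    have h_b := (((hd2 γ hx).sub_const (y ^ (γ / 2))).mul (hd4 γ hx)).const_mul (4 * (γ - 1) * γ)
    refine (h_a.sub h_b).congr_deriv ?_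
    simp only [id_eq]
    ring
  have hg2_nonneg : ∀ x, y ≤ x →
      0 ≤ γ ^ 2 * ((γ - 1) * ((γ - 2) * x ^ (γ - 3)) * (x - y) + 2 * ((γ - 1) * x ^ (γ - 2)))
        - 4 * (γ - 1) * γ * ((γ / 2) * (x ^ (γ / 2 - 1) * x ^ (γ / 2 - 1))
            + (x ^ (γ / 2) - y ^ (γ / 2)) * ((γ / 2 - 1) * x ^ (γ / 2 - 2))) := by
    intro x hxy
    have hx : 0 < x := lt_of_lt_of_le hy hxy
    have eA : x ^ (γ / 2 - 1) * x ^ (γ / 2 - 1) = x ^ (γ - 2) := by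
      rw [← Real.rpow_add hx]; congr 1; ring
    have eB : x ^ (γ / 2) * x ^ (γ / 2 - 2) = x ^ (γ - 2) := by
      rw [← Real.rpow_add hx]; congr 1; ring
    have eC : x ^ (γ - 3) * x = x ^ (γ - 2) := by
      rw [← Real.rpow_add_one hx.ne']; congr 1; ring
    have hb := bern_key hγ hx hy.le
    have hfac : γ ^ 2 * ((γ - 1) * ((γ - 2) * x ^ (γ - 3)) * (x - y) + 2 * ((γ - 1) * x ^ (γ - 2)))
        - 4 * (γ - 1) * γ * ((γ / 2) * (x ^ (γ / 2 - 1) * x ^ (γ / 2 - 1))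
            + (x ^ (γ / 2) - y ^ (γ / 2)) * ((γ / 2 - 1) * x ^ (γ / 2 - 2)))
        = γ * (γ - 1) * (γ - 2) *
          ((γ * x ^ (γ - 2) + 2 * (y ^ (γ / 2) * x ^ (γ / 2 - 2)))
            - (γ * (y * x ^ (γ - 3)) + 2 * x ^ (γ - 2))) := by
      linear_combination (γ ^ 2 * (γ - 1) * (γ - 2)) * eC - (2 * γ ^ 2 * (γ - 1)) * eA
        - (2 * γ * (γ - 1) * (γ - 2)) * eB
    rw [hfac]
    have hc : 0 ≤ γ * (γ - 1) * (γ - 2) :=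
      mul_nonneg (mul_nonneg (by linarith) (by linarith)) (by linarith)
    exact mul_nonneg hc (by linarith)
  have hmono : MonotoneOn (fun x : ℝ =>
      γ ^ 2 * ((γ - 1) * x ^ (γ - 2) * (x - y) + (x ^ (γ - 1) - y ^ (γ - 1)))
        - 4 * (γ - 1) * γ * ((x ^ (γ / 2) - y ^ (γ / 2)) * x ^ (γ / 2 - 1))) (Ici y) := by
    apply monotoneOn_of_deriv_nonneg (convex_Ici y)
    · intro x hx
      exact (hder (lt_of_lt_of_le hy hx)).continuousAt.continuousWithinAt
    · intro x hx
      rw [interior_Ici] at hx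
      exact (hder (hy.trans hx)).differentiableAt.differentiableWithinAt
    · intro x hx
      rw [interior_Ici] at hx
      rw [(hder (hy.trans hx)).deriv]
      exact hg2_nonneg x hx.le
  intro x hx
  have h0 := hmono self_mem_Ici (mem_Ici.mpr hx) hx
  have hyval : γ ^ 2 * ((γ - 1) * y ^ (γ - 2) * (y - y) + (y ^ (γ - 1) - y ^ (γ - 1)))
      - 4 * (γ - 1) * γ * ((y ^ (γ / 2) - y ^ (γ / 2)) * y ^ (γ / 2 - 1)) = 0 := by ring
  simp only at h0
  linarith

lemma coreA (hγ : 2 ≤ γ) (hy : 0 < y) :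
    ∀ x, y ≤ x →
      4 * (γ - 1) * (x ^ (γ / 2) - y ^ (γ / 2)) ^ 2
        ≤ γ ^ 2 * ((x ^ (γ - 1) - y ^ (γ - 1)) * (x - y)) := by
  have hder : ∀ {x : ℝ}, 0 < x → HasDerivAt (fun x : ℝ =>
      γ ^ 2 * ((x ^ (γ - 1) - y ^ (γ - 1)) * (x - y))
        - 4 * (γ - 1) * (x ^ (γ / 2) - y ^ (γ / 2)) ^ 2)
      (γ ^ 2 * ((γ - 1) * x ^ (γ - 2) * (x - y) + (x ^ (γ - 1) - y ^ (γ - 1)))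
        - 4 * (γ - 1) * γ * ((x ^ (γ / 2) - y ^ (γ / 2)) * x ^ (γ / 2 - 1))) x := by
    intro x hx
    have h_a := (((hd1 γ hx).sub_const (y ^ (γ - 1))).mul
      ((hasDerivAt_id x).sub_const y)).const_mul (γ ^ 2)
    have h_b := (((hd2 γ hx).sub_const (y ^ (γ / 2))).pow 2).const_mul (4 * (γ - 1))
    refine (h_a.sub h_b).congr_deriv ?_
    simp only [id_eq]
    push_cast
    ring
  have hmono : MonotoneOn (fun x : ℝ =>
      γ ^ 2 * ((x ^ (γ - 1) - y ^ (γ - 1)) * (x - y))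
        - 4 * (γ - 1) * (x ^ (γ / 2) - y ^ (γ / 2)) ^ 2) (Ici y) := by
    apply monotoneOn_of_deriv_nonneg (convex_Ici y)
    · intro x hx
      exact (hder (lt_of_lt_of_le hy hx)).continuousAt.continuousWithinAt
    · intro x hx
      rw [interior_Ici] at hx
      exact (hder (hy.trans hx)).differentiableAt.differentiableWithinAt
    · intro x hx
      rw [interior_Ici] at hx
      rw [(hder (hy.trans hx)).deriv]
      exact coreA_g1 hγ hy x hx.le
  intro x hx
  have h0 := hmono self_mem_Ici (mem_Ici.mpr hx) hx
  simp only at h0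
  have : γ ^ 2 * ((y ^ (γ - 1) - y ^ (γ - 1)) * (y - y))
      - 4 * (γ - 1) * (y ^ (γ / 2) - y ^ (γ / 2)) ^ 2 = 0 := by ring
  linarith


variable {γ p x y s z : ℝ}

lemma Anonneg (hγ : 2 ≤ γ) (hy : 0 ≤ y) (hxy : y ≤ x) :
    4 * (γ - 1) * (x ^ (γ / 2) - y ^ (γ / 2)) ^ 2
      ≤ γ ^ 2 * ((x ^ (γ - 1) - y ^ (γ - 1)) * (x - y)) := by
  rcases hy.eq_or_lt with h0 | h0
  · -- y = 0
    rcases (h0.le.trans hxy).eq_or_lt with hx0 | hx0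
    · simp [← h0, ← hx0, Real.zero_rpow (show γ / 2 ≠ 0 from ne_of_gt (by linarith)),
        Real.zero_rpow (show γ - 1 ≠ 0 from ne_of_gt (by linarith))]
    · rw [← h0]
      rw [Real.zero_rpow (show γ / 2 ≠ 0 from ne_of_gt (by linarith)),
        Real.zero_rpow (show γ - 1 ≠ 0 from ne_of_gt (by linarith))]
      have e : x ^ (γ / 2) * x ^ (γ / 2) = x ^ (γ - 1) * x := by
        rw [← Real.rpow_add hx0, ← Real.rpow_add_one hx0.ne']
        congr 1; ring
      nlinarith [mul_nonneg (sq_nonneg (γ - 2))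
        (mul_nonneg (Real.rpow_nonneg hx0.le (γ - 1)) hx0.le)]
  · exact coreA hγ h0 x hxy

lemma Amixed (hγ : 2 ≤ γ) (hs : 0 < s) (hz : 0 < z) :
    4 * (γ - 1) * (s ^ (γ / 2) + z ^ (γ / 2)) ^ 2
      ≤ γ ^ 2 * ((s ^ (γ - 1) + z ^ (γ - 1)) * (s + z)) := by
  have hmul : ∀ {u : ℝ}, 0 < u → ∀ q r : ℝ, u ^ q * u ^ r = u ^ (q + r) :=
    fun hu q r => (Real.rpow_add hu q r).symm
  have e1 : (s ^ ((γ - 1) / 2) * z ^ ((1 : ℝ) / 2)) ^ 2 = s ^ (γ - 1) * z := by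
    rw [mul_pow, sq, sq, hmul hs, hmul hz]
    rw [show (γ - 1) / 2 + (γ - 1) / 2 = γ - 1 by ring,
      show (1 : ℝ) / 2 + 1 / 2 = 1 by ring, Real.rpow_one]
  have e2 : (s ^ ((1 : ℝ) / 2) * z ^ ((γ - 1) / 2)) ^ 2 = s * z ^ (γ - 1) := by
    rw [mul_pow, sq, sq, hmul hs, hmul hz]
    rw [show (γ - 1) / 2 + (γ - 1) / 2 = γ - 1 by ring,
      show (1 : ℝ) / 2 + 1 / 2 = 1 by ring, Real.rpow_one]
  have e3 : (s ^ ((γ - 1) / 2) * z ^ ((1 : ℝ) / 2)) * (s ^ ((1 : ℝ) / 2) * z ^ ((γ - 1) / 2))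
      = s ^ (γ / 2) * z ^ (γ / 2) := by
    rw [show s ^ ((γ - 1) / 2) * z ^ ((1 : ℝ) / 2) * (s ^ ((1 : ℝ) / 2) * z ^ ((γ - 1) / 2))
      = (s ^ ((γ - 1) / 2) * s ^ ((1 : ℝ) / 2)) * (z ^ ((1 : ℝ) / 2) * z ^ ((γ - 1) / 2)) by ring,
      hmul hs, hmul hz]
    congr 1 <;> · congr 1; ring
  have cross : 2 * (s ^ (γ / 2) * z ^ (γ / 2)) ≤ s ^ (γ - 1) * z + s * z ^ (γ - 1) := by
    have h := two_mul_le_add_sq (s ^ ((γ - 1) / 2) * z ^ ((1 : ℝ) / 2))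
      (s ^ ((1 : ℝ) / 2) * z ^ ((γ - 1) / 2))
    calc 2 * (s ^ (γ / 2) * z ^ (γ / 2))
        = 2 * ((s ^ ((γ - 1) / 2) * z ^ ((1 : ℝ) / 2)) * (s ^ ((1 : ℝ) / 2) * z ^ ((γ - 1) / 2))) := by
          rw [e3]
      _ ≤ _ := by nlinarith [h]
    
  have es : s ^ (γ - 1) * s = s ^ (γ / 2) * s ^ (γ / 2) := by
    rw [hmul hs, ← Real.rpow_add_one hs.ne']; congr 1; ring
  have ez : z ^ (γ - 1) * z = z ^ (γ / 2) * z ^ (γ / 2) := by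
    rw [hmul hz, ← Real.rpow_add_one hz.ne']; congr 1; ring
  have h1 : 0 ≤ (γ - 2) ^ 2 * (s ^ (γ / 2) * s ^ (γ / 2) + z ^ (γ / 2) * z ^ (γ / 2)
      + (s ^ (γ - 1) * z + s * z ^ (γ - 1))) := by
    have := Real.rpow_nonneg hs.le (γ - 1)
    have := Real.rpow_nonneg hz.le (γ - 1)
    have := Real.rpow_nonneg hs.le (γ / 2)
    have := Real.rpow_nonneg hz.le (γ / 2)
    positivity
  have h2 : 0 ≤ (4 * (γ - 1)) * ((s ^ (γ - 1) * z + s * z ^ (γ - 1))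
      - 2 * (s ^ (γ / 2) * z ^ (γ / 2))) :=
    mul_nonneg (by linarith) (by linarith)
  nlinarith [h1, h2, es, ez]

lemma Aall (γ : ℝ) (hγ : 2 ≤ γ) (s t : ℝ) :
    4 * (γ - 1) * (|s| ^ ((γ - 2) / 2) * s - |t| ^ ((γ - 2) / 2) * t) ^ 2
      ≤ γ ^ 2 * ((J γ s - J γ t) * (s - t)) := by
  have hγ1 : (1 : ℝ) < γ := by linarith
  -- helper for t ≤ s
  have main : ∀ s t : ℝ, t ≤ s →
      4 * (γ - 1) * (|s| ^ ((γ - 2) / 2) * s - |t| ^ ((γ - 2) / 2) * t) ^ 2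
        ≤ γ ^ 2 * ((J γ s - J γ t) * (s - t)) := by
    intro s t hts
    rcases le_or_gt 0 t with h0t | h0t
    · rw [Vpos' hγ h0t, Vpos' hγ (h0t.trans hts), Jpos' hγ1 h0t, Jpos' hγ1 (h0t.trans hts)]
      exact Anonneg hγ h0t hts
    · rcases le_or_gt s 0 with hs0 | hs0
      · have key := Anonneg (x := -t) (y := -s) hγ (by linarith) (by linarith)
        have vs : |s| ^ ((γ - 2) / 2) * s = -((-s) ^ (γ / 2)) := by
          have hv := Vpos' (u := -s) hγ (by linarith)
          rw [← abs_neg]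
          linear_combination -hv
        have vt : |t| ^ ((γ - 2) / 2) * t = -((-t) ^ (γ / 2)) := by
          have hv := Vpos' (u := -t) hγ (by linarith)
          rw [← abs_neg]
          linear_combination -hv
        have js : J γ s = -((-s) ^ (γ - 1)) := by
          have h := Jodd' γ (-s)
          rw [neg_neg] at h
          rw [h, Jpos' hγ1 (by linarith : (0:ℝ) ≤ -s)]
        have jt : J γ t = -((-t) ^ (γ - 1)) := by
          have h := Jodd' γ (-t)
          rw [neg_neg] at h
          rw [h, Jpos' hγ1 (by linarith : (0:ℝ) ≤ -t)]
        rw [vs, vt, js, jt]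
        nlinarith [key]
      · have key := Amixed (s := s) (z := -t) hγ hs0 (by linarith)
        have vt : |t| ^ ((γ - 2) / 2) * t = -((-t) ^ (γ / 2)) := by
          have hv := Vpos' (u := -t) hγ (by linarith)
          rw [← abs_neg]
          linear_combination -hv
        have jt : J γ t = -((-t) ^ (γ - 1)) := by
          have h := Jodd' γ (-t)
          rw [neg_neg] at h
          rw [h, Jpos' hγ1 (by linarith : (0:ℝ) ≤ -t)]
        rw [Vpos' hγ hs0.le, Jpos' hγ1 hs0.le, vt, jt]
        nlinarith [key]
  rcases le_total t s with h | h
  · exact main s t h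
  · have := main t s h
    nlinarith [this]


variable {p x y s z : ℝ}

lemma coreB (hp1 : 1 < p) (hp2 : p < 2) (hy : 0 < y) (hxy : y < x) :
    (p - 1) * (x - y) * (x + y) ^ (p - 2) ≤ x ^ (p - 1) - y ^ (p - 1) := by
  have hx : 0 < x := hy.trans hxy
  have hcont : ContinuousOn (fun u : ℝ => u ^ (p - 1)) (Icc y x) := fun u _ =>
    (Real.continuousAt_rpow_const u (p - 1) (Or.inr (by linarith))).continuousWithinAt
  have hderiv : ∀ u ∈ Ioo y x, HasDerivAt (fun u : ℝ => u ^ (p - 1)) ((p - 1) * u ^ (p - 2)) u := by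
    intro u hu
    have hu0 : 0 < u := hy.trans hu.1
    simpa [show p - 1 - 1 = p - 2 by ring] using
      Real.hasDerivAt_rpow_const (x := u) (p := p - 1) (Or.inl hu0.ne')
  obtain ⟨ξ, hξ, hslope⟩ := exists_hasDerivAt_eq_slope (fun u : ℝ => u ^ (p - 1))
    (fun u => (p - 1) * u ^ (p - 2)) hxy hcont hderiv
  have hξ0 : 0 < ξ := hy.trans hξ.1
  have heq : x ^ (p - 1) - y ^ (p - 1) = (p - 1) * ξ ^ (p - 2) * (x - y) := by
    rw [eq_div_iff (sub_ne_zero.mpr (ne_of_gt hxy))] at hslope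
    linarith [hslope]
  have hb : (x + y) ^ (p - 2) ≤ ξ ^ (p - 2) :=
    Real.rpow_le_rpow_of_nonpos hξ0 (by linarith [hξ.2]) (by linarith)
  have hmul := mul_le_mul_of_nonneg_left hb
    (show (0 : ℝ) ≤ (p - 1) * (x - y) by
      apply mul_nonneg <;> linarith)
  calc (p - 1) * (x - y) * (x + y) ^ (p - 2)
      ≤ (p - 1) * (x - y) * ξ ^ (p - 2) := hmul
    _ = x ^ (p - 1) - y ^ (p - 1) := by rw [heq]; ring

lemma Bnonneg (hp1 : 1 < p) (hp2 : p < 2) (hy : 0 ≤ y) (hxy : y ≤ x) :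
    (p - 1) * (x - y) ^ 2 * (x + y) ^ (p - 2) ≤ (x ^ (p - 1) - y ^ (p - 1)) * (x - y) := by
  rcases hxy.eq_or_lt with h | h
  · rw [h]; simp
  rcases hy.eq_or_lt with h0 | h0
  · rw [← h0] at h ⊢
    rw [Real.zero_rpow (show p - 1 ≠ 0 from ne_of_gt (by linarith))]
    rw [add_zero, sub_zero, sub_zero]
    have e1x : x ^ (p - 2) * x * x = x ^ (p - 1) * x := by
      rw [← Real.rpow_add_one h.ne']
      congr 2
      ring
    have h2 : 0 ≤ x ^ (p - 1) := Real.rpow_nonneg h.le _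
    have h3 : 0 ≤ x ^ (p - 1) * (2 - p) * x :=
      mul_nonneg (mul_nonneg h2 (by linarith)) h.le
    nlinarith [e1x, h3]
  · have := mul_le_mul_of_nonneg_right (coreB hp1 hp2 h0 h) (show (0:ℝ) ≤ x - y by linarith)
    nlinarith [this]

lemma Bmixed (hp1 : 1 < p) (hp2 : p < 2) (hx : 0 < x) (hz : 0 < z) :
    (p - 1) * (x + z) ^ 2 * (x + z) ^ (p - 2) ≤ (x ^ (p - 1) + z ^ (p - 1)) * (x + z) := by
  have hxz : (0 : ℝ) < x + z := by linarith
  have e1 : (x + z) ^ (p - 2) * (x + z) = (x + z) ^ (p - 1) := by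
    rw [← Real.rpow_add_one hxz.ne']; congr 1; ring
  have hsub : (x + z) ^ (p - 1) ≤ x ^ (p - 1) + z ^ (p - 1) := by
    have h := NNReal.rpow_add_le_add_rpow (x.toNNReal) (z.toNNReal) (p := p - 1)
      (by linarith) (by linarith)
    rw [← NNReal.coe_le_coe] at h
    push_cast at h
    rwa [Real.coe_toNNReal _ hx.le, Real.coe_toNNReal _ hz.le] at h
  have h7 : (p - 1) * (x + z) ^ (p - 1) ≤ x ^ (p - 1) + z ^ (p - 1) := by
    nlinarith [Real.rpow_nonneg hxz.le (p - 1), hsub]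
  have h8 := mul_le_mul_of_nonneg_right h7 hxz.le
  calc (p - 1) * (x + z) ^ 2 * (x + z) ^ (p - 2)
      = (p - 1) * (x + z) ^ (p - 1) * (x + z) := by rw [← e1]; ring
    _ ≤ (x ^ (p - 1) + z ^ (p - 1)) * (x + z) := h8

lemma Ball (p : ℝ) (hp1 : 1 < p) (hp2 : p < 2) (x y : ℝ) :
    (p - 1) * (x - y) ^ 2 * (|x| + |y|) ^ (p - 2) ≤ (J p x - J p y) * (x - y) := by
  have main : ∀ x y : ℝ, y ≤ x →
      (p - 1) * (x - y) ^ 2 * (|x| + |y|) ^ (p - 2) ≤ (J p x - J p y) * (x - y) := by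
    intro x y hyx
    rcases le_or_gt 0 y with h0y | h0y
    · rw [Jpos' hp1 h0y, Jpos' hp1 (h0y.trans hyx),
        abs_of_nonneg h0y, abs_of_nonneg (h0y.trans hyx)]
      exact Bnonneg hp1 hp2 h0y hyx
    · rcases le_or_gt x 0 with hx0 | hx0
      · have key := Bnonneg (x := -y) (y := -x) hp1 hp2 (by linarith) (by linarith)
        have jx : J p x = -((-x) ^ (p - 1)) := by
          have h := Jodd' p (-x)
          rw [neg_neg] at h
          rw [h, Jpos' hp1 (by linarith : (0:ℝ) ≤ -x)]
        have jy : J p y = -((-y) ^ (p - 1)) := by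
          have h := Jodd' p (-y)
          rw [neg_neg] at h
          rw [h, Jpos' hp1 (by linarith : (0:ℝ) ≤ -y)]
        rw [jx, jy, abs_of_nonpos hx0, abs_of_nonpos h0y.le,
          show -x + -y = -y + -x by ring]
        nlinarith [key]
      · have key := Bmixed (x := x) (z := -y) hp1 hp2 hx0 (by linarith)
        have jy : J p y = -((-y) ^ (p - 1)) := by
          have h := Jodd' p (-y)
          rw [neg_neg] at h
          rw [h, Jpos' hp1 (by linarith : (0:ℝ) ≤ -y)]
        rw [Jpos' hp1 hx0.le, jy, abs_of_pos hx0, abs_of_neg h0y]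
        nlinarith [key]
  rcases le_total y x with h | h
  · exact main x y h
  · have := main y x h
    rw [add_comm |y| |x|] at this
    nlinarith [this]


theorem stmt4 (p γ a b c d : ℝ) (hγ : 2 ≤ γ) (hp1 : 1 < p) (hp2 : p < 2)
    (h : ¬(a - c = 0 ∧ b - d = 0)) :
    4 * (γ - 1) * (p - 1) / γ ^ 2 *
        |(|a - b| ^ ((γ - 2) / 2) * (a - b) - |c - d| ^ ((γ - 2) / 2) * (c - d))| ^ 2 *
        (|a - c| + |b - d|) ^ (p - 2)
      ≤ (J γ (a - b) - J γ (c - d)) * (J p (a - c) - J p (b - d)) := by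
  have hγ2 : (0 : ℝ) < γ ^ 2 := by positivity
  by_cases hxy : a - c = b - d
  · have hst : a - b = c - d := by linarith [hxy]
    rw [hst]
    simp
  · have hA := Aall γ hγ (a - b) (c - d)
    have hB := Ball p hp1 hp2 (a - c) (b - d)
    have hs : (a - b) - (c - d) = (a - c) - (b - d) := by ring
    rw [hs] at hA
    have hδ2 : 0 < ((a - c) - (b - d)) ^ 2 := by
      have : (a - c) - (b - d) ≠ 0 := sub_ne_zero_of_ne hxy
      positivity
    have h1 : 0 ≤ 4 * (γ - 1) *
        (|a - b| ^ ((γ - 2) / 2) * (a - b) - |c - d| ^ ((γ - 2) / 2) * (c - d)) ^ 2 :=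
      mul_nonneg (by linarith) (sq_nonneg _)
    have h2 : 0 ≤ (p - 1) * ((a - c) - (b - d)) ^ 2 * (|a - c| + |b - d|) ^ (p - 2) := by
      have : 0 ≤ (|a - c| + |b - d|) ^ (p - 2) :=
        Real.rpow_nonneg (by positivity) _
      have h' : 0 ≤ (p - 1) * ((a - c) - (b - d)) ^ 2 :=
        mul_nonneg (by linarith) (sq_nonneg _)
      exact mul_nonneg h' this
    have key := mul_le_mul hA hB h2 (le_trans h1 hA)
    rw [div_mul_eq_mul_div, div_mul_eq_mul_div, div_le_iff₀ hγ2]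
    refine le_of_mul_le_mul_right ?_ hδ2
    calc 4 * (γ - 1) * (p - 1) *
          |(|a - b| ^ ((γ - 2) / 2) * (a - b) - |c - d| ^ ((γ - 2) / 2) * (c - d))| ^ 2 *
          (|a - c| + |b - d|) ^ (p - 2) * ((a - c) - (b - d)) ^ 2
        = (4 * (γ - 1) *
            (|a - b| ^ ((γ - 2) / 2) * (a - b) - |c - d| ^ ((γ - 2) / 2) * (c - d)) ^ 2) *
            ((p - 1) * ((a - c) - (b - d)) ^ 2 * (|a - c| + |b - d|) ^ (p - 2)) := by
          rw [sq_abs]; ring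
      _ ≤ (γ ^ 2 * ((J γ (a - b) - J γ (c - d)) * ((a - c) - (b - d)))) *
            ((J p (a - c) - J p (b - d)) * ((a - c) - (b - d))) := key
      _ = (J γ (a - b) - J γ (c - d)) * (J p (a - c) - J p (b - d)) * γ ^ 2 *
            ((a - c) - (b - d)) ^ 2 := by ring
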